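/- Let F be a finite set of non-constant irreducible integer polynomials with positive leading coefficient, let P be an infinite set of primes, let n > 1 be an integer, and let 0 = d₀ < d₁ < ... < d_l be integers. Then there exist natural numbers r, a and pairwise distinct primes p₀,...,p_l ∈ P such that, setting p = p₀⋯p_l, for every non-negative integer k and every i ∈ {0,...,l}: (1) x^n + k·p·x + a + dᵢ is irreducible over ℤ; (2) r^n + k·p·r + a + dᵢ is coprime to p; (3) f(r) is coprime to p for every f ∈ F. -/

import Mathlib

open Polynomial

lemma crt_nat {s : ℕ} (m : Fin s → ℕ) (hpos : ∀ i, m i ≠ 0)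
    (hcop : Pairwise (Function.onFun Nat.Coprime m)) (c : Fin s → ℤ) :
    ∃ w : ℕ, ∀ i, ((w : ℤ) : ZMod (m i)) = ((c i : ZMod (m i))) := by
  haveI : NeZero (∏ i, m i) := ⟨Finset.prod_ne_zero_iff.mpr fun i _ => hpos i⟩
  let e := ZMod.prodEquivPi m hcop
  set t : Π i, ZMod (m i) := fun i => (c i : ZMod (m i)) with ht
  refine ⟨(e.symm t).val, fun i => ?_⟩
  have h2 : (((e.symm t).val : ℤ) : ZMod (∏ i, m i)) = e.symm t := by
    push_cast
    simp [ZMod.natCast_val, ZMod.cast_id]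
  have h1 : e (((e.symm t).val : ℤ) : ZMod (∏ i, m i))
      = (((e.symm t).val : ℤ) : Π i, ZMod (m i)) := map_intCast e _
  rw [h2, e.apply_symm_apply] at h1
  have h3 := congrFun h1 i
  simpa [Pi.intCast_apply, ht] using h3.symm

lemma coeff_trinomial (n : ℕ) (hn : 1 < n) (b c : ℤ) (m : ℕ) :
    ((X:ℤ[X])^n + C b * X + C c).coeff m
      = if m = n then 1 else if m = 1 then b else if m = 0 then c else 0 := by
  simp only [coeff_add, coeff_X_pow, coeff_C_mul, coeff_X, coeff_C]
  split_ifs <;> first | (exfalso; omega) | ring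

lemma irred_primitive {f : ℤ[X]} (hf : Irreducible f) (hdeg : 1 ≤ f.natDegree) :
    f.IsPrimitive := by
  intro r hr
  obtain ⟨g, hg⟩ := hr
  rcases hf.isUnit_or_isUnit hg with h | h
  · exact Polynomial.isUnit_C.mp h
  · exfalso
    have h1 : f.natDegree ≤ (C r).natDegree + g.natDegree := hg ▸ natDegree_mul_le
    have h2 : g.natDegree = 0 := natDegree_eq_zero_of_isUnit h
    simp [h2, natDegree_C] at h1
    omega

lemma map_ne_zero_of_primitive {f : ℤ[X]} (hprim : f.IsPrimitive) {q : ℕ} (hq : q.Prime) :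
    f.map (Int.castRingHom (ZMod q)) ≠ 0 := by
  intro h
  have hdvd : ∀ i, (q : ℤ) ∣ f.coeff i := by
    intro i
    have := congrArg (fun p => Polynomial.coeff p i) h
    simp only [coeff_map, coeff_zero] at this
    exact (ZMod.intCast_zmod_eq_zero_iff_dvd _ _).mp this
  have : IsUnit ((q : ℕ) : ℤ) := hprim _ ((C_dvd_iff_dvd_coeff _ _).mpr hdvd)
  have hpq : Prime ((q : ℕ) : ℤ) := by rw [Int.prime_iff_natAbs_prime]; simpa using hq
  exact hpq.not_unit this

theorem large_primes_progressions (F : Finset (Polynomial ℤ))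
    (hF : ∀ f ∈ F, Irreducible f ∧ 1 ≤ f.natDegree ∧ 0 < f.leadingCoeff)
    (P : Set ℕ) (hP : P.Infinite) (hPprime : ∀ q ∈ P, q.Prime)
    (n : ℕ) (hn : 1 < n) (l : ℕ) (d : Fin (l + 1) → ℤ)
    (hd0 : d 0 = 0) (hmono : StrictMono d) :
    ∃ (r a : ℕ) (ps : Fin (l + 1) → ℕ), Function.Injective ps ∧ (∀ i, ps i ∈ P) ∧
      ∀ (k : ℕ) (i : Fin (l + 1)),
        Irreducible (X ^ n + C ((k : ℤ) * ∏ j, (ps j : ℤ)) * X + C ((a : ℤ) + d i)) ∧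
        IsCoprime ((r : ℤ) ^ n + (k : ℤ) * (∏ j, (ps j : ℤ)) * r + a + d i)
          (∏ j, (ps j : ℤ)) ∧
        ∀ f ∈ F, IsCoprime (f.eval (r : ℤ)) (∏ j, (ps j : ℤ)) := by
  classical
  set B : ℕ := (l + 1) * n + ∑ f ∈ F, f.natDegree with hB
  -- choose the primes
  have hPB : (P \ Set.Iic B).Infinite := hP.diff (Set.finite_Iic B)
  obtain ⟨T, hTsub, hTcard⟩ := hPB.exists_subset_card_eq (l + 1)
  let eT := T.orderIsoOfFin hTcard
  set ps : Fin (l + 1) → ℕ := fun i => (eT i : ℕ) with hps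
  have hinj : Function.Injective ps := fun i j h => eT.injective (Subtype.ext h)
  have hmem : ∀ i, ps i ∈ P \ Set.Iic B := fun i => hTsub (eT i).2
  have hPmem : ∀ i, ps i ∈ P := fun i => (hmem i).1
  have hBlt : ∀ i, B < ps i := fun i => lt_of_not_ge fun h => (hmem i).2 h
  have hq : ∀ i, (ps i).Prime := fun i => hPprime _ (hPmem i)
  have hqInt : ∀ i, Prime ((ps i : ℕ) : ℤ) := fun i => by
    rw [Int.prime_iff_natAbs_prime]; simpa using hq i
  have hqpos : ∀ i, ps i ≠ 0 := fun i => (hq i).ne_zero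
  have hpair : Pairwise (Function.onFun Nat.Coprime ps) := fun i j hij =>
    (Nat.coprime_primes (hq i) (hq j)).mpr (fun h => hij (hinj h))
  -- choose a
  obtain ⟨a, ha⟩ := crt_nat (fun i => ps i ^ 2)
    (fun i => pow_ne_zero _ (hqpos i))
    (fun i j hij => Nat.Coprime.pow _ _ (hpair hij))
    (fun i => (ps i : ℤ) - d i)
  have hdvd2 : ∀ i, ((ps i : ℤ)) ^ 2 ∣ ((a : ℤ) + d i - ps i) := by
    intro i
    have h0 : (((a : ℤ) + d i - ps i : ℤ) : ZMod (ps i ^ 2)) = 0 := by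
      have key := ha i
      push_cast at key ⊢
      rw [key]
      ring
    have := (ZMod.intCast_zmod_eq_zero_iff_dvd _ _).mp h0
    exact_mod_cast this
  have hdiv : ∀ i, (ps i : ℤ) ∣ ((a : ℤ) + d i) := by
    intro i
    have : (a : ℤ) + d i = ((a : ℤ) + d i - ps i) + ps i := by ring
    rw [this]
    exact dvd_add (dvd_trans (dvd_pow_self _ two_ne_zero) (hdvd2 i)) dvd_rfl
  have hnotdiv : ∀ i, ¬ ((ps i : ℤ)) ^ 2 ∣ ((a : ℤ) + d i) := by
    intro i h
    have hps2 : ((ps i : ℤ)) ^ 2 ∣ (ps i : ℤ) := by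
      have h2 := dvd_sub h (hdvd2 i)
      have e : ((a : ℤ) + d i) - ((a : ℤ) + d i - ps i) = (ps i : ℤ) := by ring
      rwa [e] at h2
    have hnat : ps i ^ 2 ∣ ps i := by exact_mod_cast hps2
    have := Nat.le_of_dvd (hq i).pos hnat
    nlinarith [(hq i).two_le]
  -- choose good residues
  have hgood : ∀ j : Fin (l + 1), ∃ x : ZMod (ps j),
      (∀ i : Fin (l + 1),
        (((X : ℤ[X]) ^ n + C ((a : ℤ) + d i)).map (Int.castRingHom (ZMod (ps j)))).eval x ≠ 0) ∧
      (∀ f ∈ F, (f.map (Int.castRingHom (ZMod (ps j)))).eval x ≠ 0) := by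
    intro j
    haveI : Fact (ps j).Prime := ⟨hq j⟩
    set φ := Int.castRingHom (ZMod (ps j)) with hφ
    set bad : Finset (ZMod (ps j)) :=
      (Finset.univ.biUnion fun i : Fin (l + 1) =>
        (((X : ℤ[X]) ^ n + C ((a : ℤ) + d i)).map φ).roots.toFinset) ∪
      (F.biUnion fun f => ((f.map φ).roots.toFinset)) with hbad
    have hcard : bad.card ≤ B := by
      refine le_trans (Finset.card_union_le _ _) ?_
      rw [hB]
      gcongr
      · refine le_trans (Finset.card_biUnion_le) ?_
        refine le_trans (Finset.sum_le_sum (g := fun _ => n) fun i _ => ?_) ?_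
        · refine le_trans (Multiset.toFinset_card_le _) ?_
          refine le_trans (card_roots' _) ?_
          refine le_trans natDegree_map_le ?_
          exact le_of_eq natDegree_X_pow_add_C
        · rw [Finset.sum_const, Finset.card_univ, Fintype.card_fin, smul_eq_mul]
      · refine le_trans (Finset.card_biUnion_le) ?_
        refine Finset.sum_le_sum fun f _ => ?_
        refine le_trans (Multiset.toFinset_card_le _) ?_
        exact le_trans (card_roots' _) natDegree_map_le
    have hlt : bad.card < Fintype.card (ZMod (ps j)) := by
      rw [ZMod.card]
      exact lt_of_le_of_lt hcard (hBlt j)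
    have hcompl : (badᶜ : Finset (ZMod (ps j))).Nonempty := by
      rw [← Finset.card_pos, Finset.card_compl]
      omega
    obtain ⟨x, hx⟩ := hcompl
    rw [Finset.mem_compl] at hx
    refine ⟨x, fun i h => hx ?_, fun f hf h => hx ?_⟩
    · rw [hbad]
      refine Finset.mem_union_left _ (Finset.mem_biUnion.mpr ⟨i, Finset.mem_univ i, ?_⟩)
      rw [Multiset.mem_toFinset, mem_roots]
      · exact h
      · exact (Monic.map φ (monic_X_pow_add_C _ (by omega))).ne_zero
    · rw [hbad]
      refine Finset.mem_union_right _ (Finset.mem_biUnion.mpr ⟨f, hf, ?_⟩)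
      rw [Multiset.mem_toFinset, mem_roots]
      · exact h
      · exact map_ne_zero_of_primitive
          (irred_primitive (hF f hf).1 (hF f hf).2.1) (hq j)
    -- end hgood
  choose x hx1 hx2 using hgood
  obtain ⟨r, hr⟩ := crt_nat ps hqpos hpair (fun j => ((x j).val : ℤ))
  have hrx : ∀ j, ((r : ℤ) : ZMod (ps j)) = x j := by
    intro j
    haveI : NeZero (ps j) := ⟨hqpos j⟩
    rw [hr j]
    push_cast
    simp [ZMod.natCast_val, ZMod.cast_id]
  -- key divisibility facts about r
  have hr1 : ∀ (j i : Fin (l + 1)), ¬ ((ps j : ℤ) ∣ ((r : ℤ) ^ n + a + d i)) := by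
    intro j i h
    apply hx1 j i
    rw [eval_map, ← hrx j]
    have hcoe : ((r : ℤ) : ZMod (ps j)) = (Int.castRingHom (ZMod (ps j))) (r : ℤ) := rfl
    rw [hcoe, eval₂_hom]
    have hev : eval (r : ℤ) ((X : ℤ[X]) ^ n + C ((a : ℤ) + d i))
        = (r : ℤ) ^ n + a + d i := by
      simp [add_assoc]
    rw [hev]
    exact (ZMod.intCast_zmod_eq_zero_iff_dvd _ _).mpr h
  have hr2 : ∀ (j : Fin (l + 1)), ∀ f ∈ F, ¬ ((ps j : ℤ) ∣ f.eval (r : ℤ)) := by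
    intro j f hf h
    apply hx2 j f hf
    have h0 : ((f.eval (r : ℤ) : ℤ) : ZMod (ps j)) = 0 :=
      (ZMod.intCast_zmod_eq_zero_iff_dvd _ _).mpr h
    rw [eval_map, ← hrx j]
    have hcoe : ((r : ℤ) : ZMod (ps j)) = (Int.castRingHom (ZMod (ps j))) (r : ℤ) := rfl
    rw [hcoe, eval₂_hom]
    exact h0
  -- conclude
  have hdvdPr : ∀ j, (ps j : ℤ) ∣ ∏ j, (ps j : ℤ) :=
    fun j => Finset.dvd_prod_of_mem _ (Finset.mem_univ j)
  have hPr0 : ∀ j, ((∏ j, (ps j : ℤ) : ℤ) : ZMod (ps j)) = 0 := by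
    intro j
    exact (ZMod.intCast_zmod_eq_zero_iff_dvd _ _).mpr
      (by exact_mod_cast hdvdPr j)
  refine ⟨r, a, ps, hinj, hPmem, fun k i => ⟨?_, ?_, ?_⟩⟩
  · -- irreducibility
    set b : ℤ := (k : ℤ) * ∏ j, (ps j : ℤ) with hbdef
    set cc : ℤ := (a : ℤ) + d i with hccdef
    have hassoc : (X : ℤ[X]) ^ n + C b * X + C cc = X ^ n + (C b * X + C cc) := by ring
    have hdeglin : (C b * X + C cc).degree < (n : WithBot ℕ) :=
      lt_of_le_of_lt degree_linear_le (by exact_mod_cast hn)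
    have hmonic : ((X : ℤ[X]) ^ n + C b * X + C cc).Monic := by
      rw [hassoc]
      exact monic_X_pow_add hdeglin
    have hdegf : ((X : ℤ[X]) ^ n + C b * X + C cc).degree = (n : WithBot ℕ) := by
      rw [hassoc]
      rw [degree_add_eq_left_of_degree_lt (by rwa [degree_X_pow]), degree_X_pow]
    refine irreducible_of_eisenstein_criterion
      (P := Ideal.span {((ps i : ℕ) : ℤ)})
      ((Ideal.span_singleton_prime (by exact_mod_cast (hq i).ne_zero)).mpr (hqInt i))
      ?_ ?_ ?_ ?_ hmonic.isPrimitive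
    · rw [hmonic.leadingCoeff, Ideal.mem_span_singleton]
      exact fun h => (hqInt i).not_unit (isUnit_of_dvd_one h)
    · intro m hm
      rw [hdegf] at hm
      have hmn : m < n := by exact_mod_cast hm
      rw [Ideal.mem_span_singleton]
      rcases Nat.lt_or_ge m 2 with h2 | h2
      · interval_cases m
        · rw [coeff_trinomial n hn, if_neg (by omega), if_neg (by omega), if_pos rfl]
          exact hdiv i
        · rw [coeff_trinomial n hn, if_neg (by omega), if_pos rfl, hbdef]
          exact Dvd.dvd.mul_left (hdvdPr i) _
      · rw [coeff_trinomial n hn, if_neg (by omega), if_neg (by omega), if_neg (by omega)]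
        exact dvd_zero _
    · rw [hdegf]
      exact_mod_cast (by omega : 0 < n)
    · rw [coeff_trinomial n hn, if_neg (by omega), if_neg (by omega), if_pos rfl,
        Ideal.span_singleton_pow, Ideal.mem_span_singleton]
      exact hnotdiv i
  · -- coprimality of the value
    refine IsCoprime.prod_right fun j _ => ?_
    refine ((hqInt j).coprime_iff_not_dvd.mpr ?_).symm
    intro h
    apply hr1 j i
    have h0 : (((r : ℤ) ^ n + (k : ℤ) * (∏ j, (ps j : ℤ)) * r + a + d i : ℤ) :
        ZMod (ps j)) = 0 := (ZMod.intCast_zmod_eq_zero_iff_dvd _ _).mpr h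
    apply (ZMod.intCast_zmod_eq_zero_iff_dvd _ _).mp
    push_cast at h0 ⊢
    have hz : (∏ x : Fin (l + 1), ((ps x : ℕ) : ZMod (ps j))) = 0 :=
      Finset.prod_eq_zero (Finset.mem_univ j) (ZMod.natCast_self _)
    rw [hz] at h0
    linear_combination h0
  · -- coprimality of f(r)
    intro f hf
    refine IsCoprime.prod_right fun j _ => ?_
    exact ((hqInt j).coprime_iff_not_dvd.mpr (hr2 j f hf)).symm
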